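/- Let n ≥ 1, let A ⊆ C_b(T^n × ℝ^n, ℂ) be the sup-norm closure of S_R(T*T^n), and let Φ₀ : T^n × ℝ^n → T^n × ℝ^n be the free time-1 evolution Φ₀(q,p) := (p +ᵥ q, p). Then for every f ∈ A the pullback f ∘ Φ₀ again belongs to A; i.e. free classical time evolution preserves the commutative resolvent algebra on the torus. -/

import Mathlib

noncomputable section

/-- Phase-space functions on `T*Tⁿ ≅ Tⁿ × ℝⁿ` are encoded as `ℤⁿ`-periodic (in the first
variable) functions on the cover `ℝⁿ × ℝⁿ`, with `ℝⁿ = EuclideanSpace ℝ (Fin n)`.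
`SRgen n` is the set of generators of `S_R(T*Tⁿ)`:
`(q,p) ↦ e_b(q)·e^{iξ·p}·h(P_U(p))` with `b ∈ ℤⁿ`, `U ⊆ ℝⁿ` a linear subspace, `ξ ⊥ U`,
and `h` a Schwartz function. -/
def SRgen (n : ℕ) : Set (EuclideanSpace ℝ (Fin n) × EuclideanSpace ℝ (Fin n) → ℂ) :=
  {f | ∃ (b : Fin n → ℤ) (U : Submodule ℝ (EuclideanSpace ℝ (Fin n)))
      (ξ : EuclideanSpace ℝ (Fin n)) (h : SchwartzMap (EuclideanSpace ℝ (Fin n)) ℂ),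
    (∀ u ∈ U, inner ℝ ξ u = (0 : ℝ)) ∧
    ∀ xp : EuclideanSpace ℝ (Fin n) × EuclideanSpace ℝ (Fin n),
      f xp = Complex.exp (2 * Real.pi * Complex.I * ∑ i, (b i : ℂ) * (xp.1 i : ℂ)) *
        Complex.exp (Complex.I * ((inner ℝ ξ xp.2 : ℝ) : ℂ)) *
        h (U.orthogonalProjection xp.2)}

/-- Membership in the sup-norm closure `A = C_R(T*Tⁿ)` of the linear span of the
generators `SRgen n` (i.e. of `S_R(T*Tⁿ)`). -/
def memA (n : ℕ) (f : EuclideanSpace ℝ (Fin n) × EuclideanSpace ℝ (Fin n) → ℂ) : Prop :=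
  ∀ ε : ℝ, 0 < ε → ∃ g ∈ Submodule.span ℂ (SRgen n), ∀ xp, ‖f xp - g xp‖ ≤ ε

/-! ### Auxiliary lemmas -/

lemma iteratedDeriv_expI (n : ℕ) :
    iteratedDeriv n (fun t : ℝ => Complex.exp (Complex.I * t)) =
      fun t : ℝ => Complex.I ^ n * Complex.exp (Complex.I * t) := by
  induction n with
  | zero => simp
  | succ m ih =>
      rw [iteratedDeriv_succ, ih]
      funext t
      have h1 : HasDerivAt (fun t : ℝ => Complex.I * (t : ℂ)) Complex.I t := by
        simpa using (Complex.ofRealCLM.hasDerivAt (x := t)).const_mul Complex.I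
      have h2 : HasDerivAt (fun t : ℝ => Complex.exp (Complex.I * t))
          (Complex.exp (Complex.I * t) * Complex.I) t := h1.cexp
      have h3 := h2.const_mul (Complex.I ^ m)
      rw [h3.deriv]
      ring

lemma contDiff_expI : ContDiff ℝ (⊤ : ℕ∞) (fun t : ℝ => Complex.exp (Complex.I * t)) :=
  (contDiff_const.mul Complex.ofRealCLM.contDiff).cexp

lemma expI_temperate : Function.HasTemperateGrowth (fun t : ℝ => Complex.exp (Complex.I * t)) := by
  refine ⟨contDiff_expI, fun n => ⟨0, 1, fun x => ?_⟩⟩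
  rw [norm_iteratedFDeriv_eq_norm_iteratedDeriv, iteratedDeriv_expI]
  simp [Complex.norm_exp]

section comp
variable {E F G : Type*} [NormedAddCommGroup E] [NormedSpace ℝ E]
  [NormedAddCommGroup F] [NormedSpace ℝ F] [NormedAddCommGroup G] [NormedSpace ℝ G]

lemma Function.HasTemperateGrowth.comp_clm {f : F → G} (hf : Function.HasTemperateGrowth f)
    (L : E →L[ℝ] F) : Function.HasTemperateGrowth (fun x => f (L x)) := by
  refine ⟨hf.1.comp L.contDiff, fun n => ?_⟩
  obtain ⟨k, C, h⟩ := hf.2 n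
  have hC : 0 ≤ C := by
    have := h 0
    nlinarith [norm_nonneg (iteratedFDeriv ℝ n f 0), pow_pos (by positivity : (0:ℝ) < 1 + ‖(0:F)‖) k]
  refine ⟨k, C * (1 + ‖L‖) ^ k * ‖L‖ ^ n, fun x => ?_⟩
  have hcomp : iteratedFDeriv ℝ n (f ∘ L) x =
      (iteratedFDeriv ℝ n f (L x)).compContinuousLinearMap fun _ => L :=
    L.iteratedFDeriv_comp_right hf.1 x (mod_cast le_top)
  calc ‖iteratedFDeriv ℝ n (fun x => f (L x)) x‖
      = ‖(iteratedFDeriv ℝ n f (L x)).compContinuousLinearMap fun _ => L‖ := by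
        rw [← hcomp]; rfl
    _ ≤ ‖iteratedFDeriv ℝ n f (L x)‖ * ∏ _i : Fin n, ‖L‖ :=
        ContinuousMultilinearMap.norm_compContinuousLinearMap_le _ _
    _ ≤ (C * (1 + ‖L x‖) ^ k) * ‖L‖ ^ n := by
        rw [Finset.prod_const, Finset.card_univ, Fintype.card_fin]
        exact mul_le_mul_of_nonneg_right (h (L x)) (pow_nonneg (norm_nonneg _) n)
    _ ≤ C * ((1 + ‖L‖) ^ k * (1 + ‖x‖) ^ k) * ‖L‖ ^ n := by
        have h1 : (1 + ‖L x‖) ≤ (1 + ‖L‖) * (1 + ‖x‖) := by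
          have := L.le_opNorm x
          nlinarith [norm_nonneg (L : E →L[ℝ] F), norm_nonneg x]
        have h2 : (1 + ‖L x‖) ^ k ≤ (1 + ‖L‖) ^ k * (1 + ‖x‖) ^ k := by
          rw [← mul_pow]; exact pow_le_pow_left₀ (by positivity) h1 k
        have := mul_le_mul_of_nonneg_left h2 hC
        exact mul_le_mul_of_nonneg_right this (pow_nonneg (norm_nonneg _) n)
    _ = C * (1 + ‖L‖) ^ k * ‖L‖ ^ n * (1 + ‖x‖) ^ k := by ring

end comp

section char
variable {E : Type*} [NormedAddCommGroup E] [InnerProductSpace ℝ E]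

lemma char_temperate (w : E) :
    Function.HasTemperateGrowth (fun x : E => Complex.exp (Complex.I * ((inner ℝ w x : ℝ) : ℂ))) := by
  have := expI_temperate.comp_clm (innerSL ℝ w)
  simpa only [innerSL_apply_apply] using this

def charMul (w : E) : SchwartzMap E ℂ →L[ℝ] SchwartzMap E ℂ :=
  SchwartzMap.bilinLeftCLM (ContinuousLinearMap.mul ℝ ℂ) (char_temperate w)

lemma charMul_apply (w : E) (h : SchwartzMap E ℂ) (x : E) :
    charMul w h x = h x * Complex.exp (Complex.I * ((inner ℝ w x : ℝ) : ℂ)) := rfl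

end char

/-- Composing a generator with the free time-1 evolution gives another generator. -/
lemma gen_comp {n : ℕ} {g : EuclideanSpace ℝ (Fin n) × EuclideanSpace ℝ (Fin n) → ℂ}
    (hg : g ∈ SRgen n) :
    (fun xp : EuclideanSpace ℝ (Fin n) × EuclideanSpace ℝ (Fin n) =>
      g (xp.1 + xp.2, xp.2)) ∈ SRgen n := by
  obtain ⟨b, U, ξ, h, hperp, hgen⟩ := hg
  set v : EuclideanSpace ℝ (Fin n) := WithLp.toLp 2 (fun i => 2 * Real.pi * (b i : ℝ)) with hv
  set w : EuclideanSpace ℝ (Fin n) := (U.orthogonalProjection v : EuclideanSpace ℝ (Fin n))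
    with hw
  have hwU : w ∈ U := (U.orthogonalProjection v).2
  have hvw : v - w ∈ Uᗮ := Submodule.sub_starProjection_mem_orthogonal (K := U) v
  refine ⟨b, U, ξ + (v - w), charMul w h, ?_, ?_⟩
  · intro u hu
    rw [inner_add_left, hperp u hu, real_inner_comm,
      (Submodule.mem_orthogonal U (v - w)).1 hvw u hu, add_zero]
  · intro xp
    simp only
    rw [hgen (xp.1 + xp.2, xp.2)]
    simp only [charMul_apply]
    have r2 : (inner ℝ w ((U.orthogonalProjection xp.2 : EuclideanSpace ℝ (Fin n))) : ℝ)
        = inner ℝ w xp.2 := by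
      have h0 : (inner ℝ w (xp.2 - (U.orthogonalProjection xp.2 : EuclideanSpace ℝ (Fin n))) : ℝ)
          = 0 :=
        (Submodule.mem_orthogonal U _).1 (Submodule.sub_starProjection_mem_orthogonal (K := U) xp.2) w hwU
      rw [inner_sub_right] at h0
      linarith
    have r1 : (inner ℝ (ξ + (v - w)) xp.2 : ℝ) = inner ℝ ξ xp.2 + inner ℝ v xp.2 - inner ℝ w xp.2 := by
      rw [inner_add_left, inner_sub_left]; ring
    have r3 : (inner ℝ v xp.2 : ℝ) = ∑ i, 2 * Real.pi * (b i : ℝ) * xp.2 i := by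
      rw [PiLp.inner_apply]
      simp [hv, RCLike.inner_apply]
      exact Finset.sum_congr rfl fun i _ => by ring
    have hadd : ∀ i, (((xp.1 + xp.2) i : ℝ) : ℂ) = (xp.1 i : ℂ) + (xp.2 i : ℂ) := by
      intro i; rw [PiLp.add_apply]; push_cast; ring
    have heq : Complex.exp (2 * Real.pi * Complex.I * ∑ i, (b i : ℂ) * (((xp.1 + xp.2) i : ℝ) : ℂ))
          * Complex.exp (Complex.I * ((inner ℝ ξ xp.2 : ℝ) : ℂ))
        = Complex.exp (2 * Real.pi * Complex.I * ∑ i, (b i : ℂ) * (xp.1 i : ℂ))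
          * Complex.exp (Complex.I * ((inner ℝ (ξ + (v - w)) xp.2 : ℝ) : ℂ))
          * Complex.exp (Complex.I *
              ((inner ℝ w ((U.orthogonalProjection xp.2 : EuclideanSpace ℝ (Fin n))) : ℝ) : ℂ)) := by
      rw [← Complex.exp_add, ← Complex.exp_add, ← Complex.exp_add]
      congr 1
      simp only [hadd, r1, r2, r3]
      push_cast
      have hsum : (∑ x, (b x : ℂ) * ((xp.1 x : ℂ) + (xp.2 x : ℂ)))
          = (∑ x, (b x : ℂ) * (xp.1 x : ℂ)) + ∑ x, (b x : ℂ) * (xp.2 x : ℂ) := by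
        rw [← Finset.sum_add_distrib]
        exact Finset.sum_congr rfl fun i _ => by ring
      have hsum2 : (∑ x, 2 * (Real.pi : ℂ) * (b x : ℂ) * (xp.2 x : ℂ))
          = 2 * (Real.pi : ℂ) * ∑ x, (b x : ℂ) * (xp.2 x : ℂ) := by
        rw [Finset.mul_sum]
        exact Finset.sum_congr rfl fun i _ => by ring
      rw [hsum, hsum2]
      ring
    linear_combination (h ((U.orthogonalProjection xp.2 : EuclideanSpace ℝ (Fin n))) : ℂ) * heq

/-- Free classical time evolution `Φ₀(q,p) = (p +ᵥ q, p)` preserves the commutative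
resolvent algebra on the torus: if `f ∈ A` then `f ∘ Φ₀ ∈ A`. -/
theorem stmt10 (n : ℕ) (hn : 1 ≤ n)
    (f : EuclideanSpace ℝ (Fin n) × EuclideanSpace ℝ (Fin n) → ℂ) (hf : memA n f) :
    memA n (fun xp => f (xp.1 + xp.2, xp.2)) := by
  intro ε hε
  obtain ⟨g, hgspan, hgb⟩ := hf ε hε
  refine ⟨fun xp => g (xp.1 + xp.2, xp.2), ?_, fun xp => hgb (xp.1 + xp.2, xp.2)⟩
  let L : (EuclideanSpace ℝ (Fin n) × EuclideanSpace ℝ (Fin n) → ℂ) →ₗ[ℂ]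
      (EuclideanSpace ℝ (Fin n) × EuclideanSpace ℝ (Fin n) → ℂ) :=
    { toFun := fun g xp => g (xp.1 + xp.2, xp.2)
      map_add' := fun _ _ => rfl
      map_smul' := fun _ _ => rfl }
  have hle : Submodule.span ℂ (SRgen n) ≤ (Submodule.span ℂ (SRgen n)).comap L := by
    rw [Submodule.span_le]
    intro s hs
    exact Submodule.subset_span (gen_comp hs)
  exact hle hgspan

end
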